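/- Let F be a finite field with q = |F| elements and let K₁, K₂, K₃, n₃, S be natural numbers with K₁ + K₂ + K₃ = 2S + n₃. Writing c(M) := |GL(M,F)|, the sequence q^{2N n₃} · c(N−K₁) · c(N−K₂) · c(N−K₃) / ( c(N) · c(N−S)² ) converges, as N → ∞, to q^{K₁² + K₂² + K₃² − 2S²}. In particular, the multiplicity factor M(κ,N)² = |GL(N−K₁,F)| · |GL(N−K₂,F)| · |GL(N−K₃,F)| / ( |GL(N,F)| · |GL(N−S,F)|² ) appearing in the GL(N,q) permutation orbifold converges as N → ∞, and is O(q^{−2Nn₃}). -/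

import Mathlib

open Filter Matrix


/-- The partial product `∏_{i=1}^{M} (1 - q^{-i})`. -/
noncomputable def glP (q : ℝ) (M : ℕ) : ℝ := ∏ i ∈ Finset.range M, (1 - q⁻¹ ^ (i + 1))

lemma glP_pos {q : ℝ} (hq : 1 < q) (M : ℕ) : 0 < glP q M := by
  apply Finset.prod_pos
  intro i _
  have h0 : 0 < q := lt_trans one_pos hq
  have : q⁻¹ ^ (i + 1) < 1 :=
    pow_lt_one₀ (by positivity) ((inv_lt_one_iff₀).2 (Or.inr hq)) (by omega)
  linarith

lemma card_GL_real (F : Type*) [Field F] [Fintype F] (M : ℕ) :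
    (Nat.card (GL (Fin M) F) : ℝ) =
      (Fintype.card F : ℝ) ^ (M ^ 2) * glP (Fintype.card F : ℝ) M := by
  set q : ℝ := (Fintype.card F : ℝ) with hqdef
  have hq : 1 < Fintype.card F := Fintype.one_lt_card
  have hqR : (1 : ℝ) < q := by rw [hqdef]; exact_mod_cast hq
  have h0 : (0 : ℝ) < q := lt_trans one_pos hqR
  rw [Matrix.card_GL_field, Nat.cast_prod]
  have hfac : ∀ i : Fin M,
      ((Fintype.card F ^ M - Fintype.card F ^ (i : ℕ) : ℕ) : ℝ)
        = q ^ M * (1 - q⁻¹ ^ (M - (i : ℕ))) := by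
    intro i
    have hle : Fintype.card F ^ (i : ℕ) ≤ Fintype.card F ^ M :=
      Nat.pow_le_pow_right (le_of_lt hq) i.2.le
    have e : q ^ M * q⁻¹ ^ (M - (i : ℕ)) = q ^ (i : ℕ) := by
      rw [inv_pow, ← pow_sub₀ q (ne_of_gt h0) (Nat.sub_le M (i : ℕ))]
      congr 1
      omega
    rw [Nat.cast_sub hle, Nat.cast_pow, Nat.cast_pow, mul_sub, mul_one, e, hqdef]
  rw [Finset.prod_congr rfl (fun i _ => hfac i), Finset.prod_mul_distrib,
    Finset.prod_const, Finset.card_univ, Fintype.card_fin, ← pow_mul, ← sq]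
  congr 1
  rw [Fin.prod_univ_eq_prod_range (fun i => (1 - q⁻¹ ^ (M - i)))]
  rw [glP, ← Finset.prod_range_reflect]
  apply Finset.prod_congr rfl
  intro j hj
  congr 2
  simp only [Finset.mem_range] at hj
  omega

/-- Tail product: `∏_{j=N-K+1}^{N} (1 - q^{-j})` (for `K ≤ N`). -/
noncomputable def glU (q : ℝ) (K N : ℕ) : ℝ :=
  ∏ j ∈ Finset.range K, (1 - q⁻¹ ^ (N - K + j + 1))

lemma glU_pos {q : ℝ} (hq : 1 < q) (K N : ℕ) : 0 < glU q K N := by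
  apply Finset.prod_pos
  intro j _
  have h0 : 0 < q := lt_trans one_pos hq
  have : q⁻¹ ^ (N - K + j + 1) < 1 :=
    pow_lt_one₀ (by positivity) ((inv_lt_one_iff₀).2 (Or.inr hq)) (by omega)
  linarith

lemma glP_sub (q : ℝ) {K N : ℕ} (hK : K ≤ N) :
    glP q (N - K) * glU q K N = glP q N := by
  rw [glP, glP, glU]
  nth_rewrite 3 [show N = (N - K) + K from (Nat.sub_add_cancel hK).symm]
  rw [Finset.prod_range_add]

lemma glU_tendsto {q : ℝ} (hq : 1 < q) (K : ℕ) :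
    Filter.Tendsto (fun N => glU q K N) atTop (nhds 1) := by
  have h0 : 0 < q := lt_trans one_pos hq
  have hmain : Filter.Tendsto (fun N => ∏ j ∈ Finset.range K, (1 - q⁻¹ ^ (N - K + j + 1)))
      atTop (nhds (∏ _j ∈ Finset.range K, (1 : ℝ))) := by
    apply tendsto_finset_prod
    intro j _
    have hpow : Filter.Tendsto (fun N : ℕ => q⁻¹ ^ (N - K + j + 1)) atTop (nhds 0) := by
      have hbase : Filter.Tendsto (fun n : ℕ => q⁻¹ ^ n) atTop (nhds 0) :=
        tendsto_pow_atTop_nhds_zero_of_lt_one (by positivity)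
          ((inv_lt_one_iff₀).2 (Or.inr hq))
      have hexp : Filter.Tendsto (fun N : ℕ => N - K + j + 1) atTop atTop :=
        Filter.tendsto_atTop_mono (fun N => by omega) (Filter.tendsto_sub_atTop_nat K)
      exact hbase.comp hexp
    simpa using tendsto_const_nhds.sub hpow
  simpa only [Finset.prod_const_one, glU] using hmain

/-- Writing `c(M) = |GL(M,F)|`, if `K₁ + K₂ + K₃ = 2S + n₃` then
`q^{2Nn₃} · c(N−K₁) c(N−K₂) c(N−K₃) / (c(N) c(N−S)²) → q^{K₁²+K₂²+K₃²−2S²}` as `N → ∞`.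
In particular the multiplicity factor `M(κ,N)²` of the `GL(N,q)` permutation orbifold
converges and is `O(q^{−2Nn₃})`. -/
theorem gl_multiplicity_factor_tendsto (F : Type*) [Field F] [Fintype F]
    (K₁ K₂ K₃ n₃ S : ℕ) (h : K₁ + K₂ + K₃ = 2 * S + n₃) :
    Tendsto (fun N : ℕ =>
        (Fintype.card F : ℝ) ^ (2 * N * n₃) *
          ((Nat.card (GL (Fin (N - K₁)) F) : ℝ) * (Nat.card (GL (Fin (N - K₂)) F) : ℝ) *
            (Nat.card (GL (Fin (N - K₃)) F) : ℝ)) /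
          ((Nat.card (GL (Fin N) F) : ℝ) * (Nat.card (GL (Fin (N - S)) F) : ℝ) ^ 2))
      atTop
      (nhds ((Fintype.card F : ℝ) ^ ((K₁ : ℤ) ^ 2 + (K₂ : ℤ) ^ 2 + (K₃ : ℤ) ^ 2
        - 2 * (S : ℤ) ^ 2))) := by
  have hqN : 1 < Fintype.card F := Fintype.one_lt_card
  set q : ℝ := (Fintype.card F : ℝ) with hqdef
  have hqR : (1 : ℝ) < q := by rw [hqdef]; exact_mod_cast hqN
  have h0 : (0 : ℝ) < q := lt_trans one_pos hqR
  set C : ℤ := (K₁ : ℤ) ^ 2 + (K₂ : ℤ) ^ 2 + (K₃ : ℤ) ^ 2 - 2 * (S : ℤ) ^ 2 with hC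
  have hlim : Tendsto (fun N : ℕ =>
      q ^ C * glU q S N ^ 2 / (glU q K₁ N * glU q K₂ N * glU q K₃ N)) atTop (nhds (q ^ C)) := by
    have := (tendsto_const_nhds (x := q ^ C)).mul ((glU_tendsto hqR S).pow 2) |>.div
      (((glU_tendsto hqR K₁).mul (glU_tendsto hqR K₂)).mul (glU_tendsto hqR K₃)) (by norm_num)
    simp only [one_pow, mul_one, div_one] at this; exact this
  refine Tendsto.congr' ?_ hlim
  filter_upwards [eventually_ge_atTop (K₁ + K₂ + K₃ + S)] with N hN
  have h1 : K₁ ≤ N := by omega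
  have h2 : K₂ ≤ N := by omega
  have h3 : K₃ ≤ N := by omega
  have hS : S ≤ N := by omega
  have hu1 := glU_pos hqR K₁ N
  have hu2 := glU_pos hqR K₂ N
  have hu3 := glU_pos hqR K₃ N
  have huS := glU_pos hqR S N
  have hpN := glP_pos hqR N
  simp only [card_GL_real, ← hqdef]
  have hp1 : glP q (N - K₁) = glP q N / glU q K₁ N := by
    rw [eq_div_iff (ne_of_gt hu1)]; exact glP_sub q h1
  have hp2 : glP q (N - K₂) = glP q N / glU q K₂ N := by
    rw [eq_div_iff (ne_of_gt hu2)]; exact glP_sub q h2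
  have hp3 : glP q (N - K₃) = glP q N / glU q K₃ N := by
    rw [eq_div_iff (ne_of_gt hu3)]; exact glP_sub q h3
  have hpS : glP q (N - S) = glP q N / glU q S N := by
    rw [eq_div_iff (ne_of_gt huS)]; exact glP_sub q hS
  rw [hp1, hp2, hp3, hpS]
  have hZ : (K₁ : ℤ) + K₂ + K₃ = 2 * S + n₃ := by exact_mod_cast h
  have hkey : q ^ (2 * N * n₃) * (q ^ ((N - K₁) ^ 2) * q ^ ((N - K₂) ^ 2) * q ^ ((N - K₃) ^ 2))
      = q ^ C * (q ^ (N ^ 2) * (q ^ ((N - S) ^ 2)) ^ 2) := by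
    have l : q ^ (2 * N * n₃) * (q ^ ((N - K₁) ^ 2) * q ^ ((N - K₂) ^ 2) * q ^ ((N - K₃) ^ 2))
        = q ^ (2 * N * n₃ + (N - K₁) ^ 2 + (N - K₂) ^ 2 + (N - K₃) ^ 2) := by
      rw [pow_add, pow_add, pow_add]; ring
    have r : q ^ C * (q ^ (N ^ 2) * (q ^ ((N - S) ^ 2)) ^ 2)
        = q ^ (C + (N ^ 2 + 2 * (N - S) ^ 2 : ℕ)) := by
      rw [zpow_add₀ (ne_of_gt h0), zpow_natCast, pow_add, pow_mul']
    rw [l, r, ← zpow_natCast q (2 * N * n₃ + (N - K₁) ^ 2 + (N - K₂) ^ 2 + (N - K₃) ^ 2)]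
    congr 1
    push_cast [Nat.cast_sub h1, Nat.cast_sub h2, Nat.cast_sub h3, Nat.cast_sub hS, hC]
    linear_combination (-2 * (N : ℤ)) * hZ
  rw [div_eq_div_iff (by positivity) (by positivity)]
  field_simp
  linear_combination (-1 : ℝ) * hkey
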